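/- In the linear stochastic evolution framework, the two-point function satisfies the Feynman–Kac formula: $E[N_{t,y} N_{t,\tilde y}] = |a|^{2t} \sum_{x,\tilde x} N_{0,x} N_{0,\tilde x}\, E^{x,\tilde x}_{S,\tilde S}[e_t : (S_t, \tilde S_t) = (y, \tilde y)]$, where $(S,\tilde S)$ is the independent product of two copies of the random walk with step distribution $a_z/|a|$, $e_t = \prod_{u=1}^t w(S_{u-1}, \tilde S_{u-1}, S_u, \tilde S_u)$, and $w(x,\tilde x, y, \tilde y) = E[A_{1,x,y} A_{1,\tilde x, \tilde y}]/(a_{y-x} a_{\tilde y - \tilde x})$ when $a_{y-x}a_{\tilde y-\tilde x} \ne 0$ and $0$ otherwise. -/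

import Mathlib

open MeasureTheory ProbabilityTheory
open scoped Pointwise

namespace FKaux

variable {d : ℕ}

lemma eval_meas (t : ℕ) (x y : Fin d → ℤ) :
    Measurable (fun M : ℕ → (Fin d → ℤ) → (Fin d → ℤ) → ℝ => M t x y) := by
  have h1 : Measurable (fun M : ℕ → (Fin d → ℤ) → (Fin d → ℤ) → ℝ => M t) :=
    measurable_pi_apply t
  have h2 := h1.eval (a := x)
  exact h2.eval (a := y)

/-- iterated support sets -/
noncomputable def S (N0F B : Finset (Fin d → ℤ)) : ℕ → Finset (Fin d → ℤ)
  | 0 => N0F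
  | (t + 1) => S N0F B t + B

/-- finite-sum version of the evolution, as a pure function of the matrix sequence -/
noncomputable def F (N0 : (Fin d → ℤ) → ℝ) (S : ℕ → Finset (Fin d → ℤ)) :
    ℕ → (ℕ → (Fin d → ℤ) → (Fin d → ℤ) → ℝ) → (Fin d → ℤ) → ℝ
  | 0, _ => N0
  | (t + 1), M => fun y => ∑ x ∈ S t, F N0 S t M x * M t x y

lemma F_meas (N0 : (Fin d → ℤ) → ℝ) (S : ℕ → Finset (Fin d → ℤ)) :
    ∀ t u, Measurable (fun M : ℕ → (Fin d → ℤ) → (Fin d → ℤ) → ℝ => F N0 S t M u)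
  | 0, _ => measurable_const
  | (t + 1), u => Finset.measurable_sum _ fun x _ => (F_meas N0 S t x).mul (eval_meas t x u)

lemma F_congr (N0 : (Fin d → ℤ) → ℝ) (S : ℕ → Finset (Fin d → ℤ)) :
    ∀ t (M M' : ℕ → (Fin d → ℤ) → (Fin d → ℤ) → ℝ), (∀ s < t, M s = M' s) →
      F N0 S t M = F N0 S t M'
  | 0, _, _, _ => rfl
  | (t + 1), M, M', h => by
    funext y
    show (∑ x ∈ S t, F N0 S t M x * M t x y) = ∑ x ∈ S t, F N0 S t M' x * M' t x y
    have h1 : F N0 S t M = F N0 S t M' :=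
      F_congr N0 S t M M' fun s hs => h s (hs.trans (Nat.lt_succ_self t))
    rw [h1, h t (Nat.lt_succ_self t)]

end FKaux

/-- The linear stochastic evolution `N_t = N_0 A_1 ⋯ A_t`. -/
noncomputable def evolve {d : ℕ} {Ω : Type*} (A : ℕ → Ω → (Fin d → ℤ) → (Fin d → ℤ) → ℝ)
    (N0 : (Fin d → ℤ) → ℝ) : ℕ → Ω → (Fin d → ℤ) → ℝ
  | 0, _ => N0
  | (t + 1), ω => fun y => ∑' x, evolve A N0 t ω x * A t ω x y

/-- Feynman–Kac formula for the two-point function: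
`E[N_{t,y} N_{t,ỹ}] = |a|^{2t} ∑_{x,x̃} N_{0,x} N_{0,x̃} E^{x,x̃}[e_t : (S_t,S̃_t)=(y,ỹ)]`,
where the pair-walk expectation is encoded by the `t`-step weighted transition kernel `Q`
of the pair of independent `ā`-walks carrying the multiplicative weight `w`. -/
theorem stmt8 (d : ℕ)
    {Ω : Type*} [MeasurableSpace Ω] (μ : Measure Ω) [IsProbabilityMeasure μ]
    (A : ℕ → Ω → (Fin d → ℤ) → (Fin d → ℤ) → ℝ)
    (hAmeas : ∀ t, Measurable (A t))
    (hindep : iIndepFun A μ)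
    (hident : ∀ t, μ.map (A t) = μ.map (A 0))
    (hcols : ∀ t, iIndepFun
      (fun (y : Fin d → ℤ) ω => fun x => A t ω x y) μ)
    (hnonneg : ∀ t ω x y, 0 ≤ A t ω x y)
    (rA : ℕ)
    (hrange : ∀ t, ∀ x y : Fin d → ℤ, rA < (∑ i, (x i - y i).natAbs) →
      ∀ᵐ ω ∂μ, A t ω x y = 0)
    (hshift : ∀ z : Fin d → ℤ,
      μ.map (fun ω => fun x y => A 0 ω (x + z) (y + z)) = μ.map (A 0))
    (hsq : ∀ x y : Fin d → ℤ, Integrable (fun ω => (A 0 ω x y) ^ 2) μ)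
    (a : (Fin d → ℤ) → ℝ) (ha : ∀ y, a y = ∫ ω, A 0 ω 0 y ∂μ)
    (hapos : 0 < ∑' y, a y)
    (N0 : (Fin d → ℤ) → ℝ) (hN0nn : ∀ x, 0 ≤ N0 x)
    (hN0fin : (Function.support N0).Finite) (hN0ne : N0 ≠ 0)
    (w : (Fin d → ℤ) → (Fin d → ℤ) → (Fin d → ℤ) → (Fin d → ℤ) → ℝ)
    (hw : ∀ x x' y y', w x x' y y' =
      if a (y - x) * a (y' - x') ≠ 0
      then (∫ ω, A 0 ω x y * A 0 ω x' y' ∂μ) / (a (y - x) * a (y' - x'))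
      else 0)
    (Q : ℕ → ((Fin d → ℤ) × (Fin d → ℤ)) → ((Fin d → ℤ) × (Fin d → ℤ)) → ℝ)
    (hQ0 : ∀ pq rs, Q 0 pq rs = if rs = pq then 1 else 0)
    (hQstep : ∀ t pq rs, Q (t + 1) pq rs =
      ∑' uv : (Fin d → ℤ) × (Fin d → ℤ), Q t pq uv *
        ((a (rs.1 - uv.1) / (∑' y, a y)) * (a (rs.2 - uv.2) / (∑' y, a y)) *
          w uv.1 uv.2 rs.1 rs.2)) :
    ∀ (t : ℕ) (y y' : Fin d → ℤ),
      ∫ ω, evolve A N0 t ω y * evolve A N0 t ω y' ∂μ =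
        (∑' y'', a y'') ^ (2 * t) *
          ∑' xx : (Fin d → ℤ) × (Fin d → ℤ), N0 xx.1 * N0 xx.2 * Q t xx (y, y') := by
  classical
  set na : ℝ := ∑' z, a z with hna_def
  have hna : na ≠ 0 := ne_of_gt hapos
  -- the "ball" of radius rA
  set B : Finset (Fin d → ℤ) :=
    Fintype.piFinset (fun _ : Fin d => Finset.Icc (-(rA : ℤ)) (rA : ℤ)) with hB_def
  have hB : ∀ z : Fin d → ℤ, z ∉ B → rA < ∑ i, (z i).natAbs := by
    intro z hz
    rw [hB_def, Fintype.mem_piFinset] at hz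
    push_neg at hz
    obtain ⟨i, hi⟩ := hz
    rw [Finset.mem_Icc] at hi
    push_neg at hi
    have h1 : rA < (z i).natAbs := by
      rcases le_or_gt (-(rA : ℤ)) (z i) with h | h
      · have := hi h
        omega
      · omega
    calc rA < (z i).natAbs := h1
      _ ≤ ∑ i, (z i).natAbs :=
        Finset.single_le_sum (f := fun j => (z j).natAbs) (fun j _ => Nat.zero_le _)
          (Finset.mem_univ i)
  have hBmem : ∀ z : Fin d → ℤ, (∑ i, (z i).natAbs) ≤ rA → z ∈ B := by
    intro z hz
    by_contra h
    exact absurd hz (not_le.2 (hB z h))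
  -- entry measurability
  have hAxy : ∀ t (x y : Fin d → ℤ), Measurable (fun ω => A t ω x y) := by
    intro t x y
    have h1 := (hAmeas t).eval (a := x)
    exact h1.eval (a := y)
  -- transfer of integrals from A t to A 0
  have htrans : ∀ (t : ℕ) (g : ((Fin d → ℤ) → (Fin d → ℤ) → ℝ) → ℝ), Measurable g →
      ∫ ω, g (A t ω) ∂μ = ∫ ω, g (A 0 ω) ∂μ := by
    intro t g hg
    rw [← integral_map (hAmeas t).aemeasurable hg.aestronglyMeasurable, hident t,
      integral_map (hAmeas 0).aemeasurable hg.aestronglyMeasurable]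
  have htransInt : ∀ (t : ℕ) (g : ((Fin d → ℤ) → (Fin d → ℤ) → ℝ) → ℝ), Measurable g →
      Integrable (fun ω => g (A 0 ω)) μ → Integrable (fun ω => g (A t ω)) μ := by
    intro t g hg h0
    have h1 : Integrable g (μ.map (A 0)) := by
      rw [integrable_map_measure hg.aestronglyMeasurable (hAmeas 0).aemeasurable]
      exact h0
    have h2 : Integrable g (μ.map (A t)) := by rw [hident t]; exact h1
    rw [integrable_map_measure hg.aestronglyMeasurable (hAmeas t).aemeasurable] at h2
    exact h2
  -- mean of a single entry
  have amean0 : ∀ x y : Fin d → ℤ, ∫ ω, A 0 ω x y ∂μ = a (y - x) := by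
    intro x y
    have hg : Measurable (fun M : (Fin d → ℤ) → (Fin d → ℤ) → ℝ => M 0 (y - x)) :=
      (measurable_pi_apply (0 : Fin d → ℤ)).eval (a := y - x)
    have hφ : Measurable (fun ω => fun p q => A 0 ω (p + x) (q + x)) := by
      apply measurable_pi_lambda
      intro p
      apply measurable_pi_lambda
      intro q
      exact hAxy 0 (p + x) (q + x)
    have h1 : ∫ ω, A 0 ω (0 + x) ((y - x) + x) ∂μ = ∫ ω, A 0 ω 0 (y - x) ∂μ := by
      rw [← integral_map hφ.aemeasurable hg.aestronglyMeasurable, hshift x,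
        integral_map (hAmeas 0).aemeasurable hg.aestronglyMeasurable]
    rw [ha]
    rw [← h1]
    norm_num
  have amean : ∀ (t : ℕ) (x y : Fin d → ℤ), ∫ ω, A t ω x y ∂μ = a (y - x) := by
    intro t x y
    have hg : Measurable (fun M : (Fin d → ℤ) → (Fin d → ℤ) → ℝ => M x y) := by
      exact (measurable_pi_apply x).eval (a := y)
    rw [show (fun ω => A t ω x y) = fun ω => (fun M : (Fin d → ℤ) → (Fin d → ℤ) → ℝ => M x y)
      (A t ω) from rfl, htrans t _ hg]
    exact amean0 x y
  -- a vanishes outside B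
  have afar : ∀ z : Fin d → ℤ, z ∉ B → a z = 0 := by
    intro z hz
    have h1 : rA < ∑ i, ((0 : Fin d → ℤ) i - z i).natAbs := by
      have := hB z hz
      calc rA < ∑ i, (z i).natAbs := this
        _ = ∑ i, ((0 : Fin d → ℤ) i - z i).natAbs := by
          apply Finset.sum_congr rfl
          intro i _
          simp [Int.natAbs_neg]
    have h2 := hrange 0 0 z h1
    rw [ha]
    rw [integral_congr_ae h2, integral_zero]
  -- integrability of squares and entries
  have intsq : ∀ (t : ℕ) (x y : Fin d → ℤ), Integrable (fun ω => (A t ω x y) ^ 2) μ := by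
    intro t x y
    have hg : Measurable (fun M : (Fin d → ℤ) → (Fin d → ℤ) → ℝ => (M x y) ^ 2) :=
      ((measurable_pi_apply x).eval (a := y)).pow_const 2
    exact htransInt t _ hg (hsq x y)
  have intA1 : ∀ (t : ℕ) (x y : Fin d → ℤ), Integrable (fun ω => A t ω x y) μ := by
    intro t x y
    apply Integrable.mono' (((intsq t x y).add (integrable_const 1)).div_const 2)
      ((hAxy t x y).aestronglyMeasurable)
    filter_upwards with ω
    have h0 := hnonneg t ω x y
    simp only [Pi.add_apply]
    rw [Real.norm_eq_abs, abs_of_nonneg h0]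
    nlinarith [sq_nonneg (A t ω x y - 1)]
  have intAA : ∀ (t : ℕ) (x y x' y' : Fin d → ℤ),
      Integrable (fun ω => A t ω x y * A t ω x' y') μ := by
    intro t x y x' y'
    apply Integrable.mono' (((intsq t x y).add (intsq t x' y')).div_const 2)
      (((hAxy t x y).mul (hAxy t x' y')).aestronglyMeasurable)
    filter_upwards with ω
    have h0 := hnonneg t ω x y
    have h1 := hnonneg t ω x' y'
    simp only [Pi.add_apply, Pi.mul_apply]
    rw [Real.norm_eq_abs, abs_of_nonneg (mul_nonneg h0 h1)]
    nlinarith [sq_nonneg (A t ω x y - A t ω x' y')]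
  -- the two-point identity defining w
  have mAA : ∀ (t : ℕ) (x x' y y' : Fin d → ℤ),
      ∫ ω, A t ω x y * A t ω x' y' ∂μ = a (y - x) * a (y' - x') * w x x' y y' := by
    intro t x x' y y'
    have hg : Measurable (fun M : (Fin d → ℤ) → (Fin d → ℤ) → ℝ => M x y * M x' y') :=
      Measurable.mul (f := fun M : (Fin d → ℤ) → (Fin d → ℤ) → ℝ => M x y) (g := fun M => M x' y')
        ((measurable_pi_apply x).eval (a := y)) ((measurable_pi_apply x').eval (a := y'))
    rw [show (fun ω => A t ω x y * A t ω x' y') = fun ω =>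
      (fun M : (Fin d → ℤ) → (Fin d → ℤ) → ℝ => M x y * M x' y') (A t ω) from rfl,
      htrans t _ hg]
    by_cases h : a (y - x) * a (y' - x') ≠ 0
    · rw [hw, if_pos h]
      field_simp
      rw [mul_assoc _ (a (y - x)) (a (y' - x')), mul_div_cancel_right₀ _ h]
    · push_neg at h
      rw [hw, if_neg (not_not.2 h), mul_zero]
      -- one of the two means vanishes, so the corresponding entry is a.e. zero
      rcases mul_eq_zero.1 h with h0 | h0
      · have h1 : ∫ ω, A 0 ω x y ∂μ = 0 := by rw [amean0 x y, h0]
        have h2 : (fun ω => A 0 ω x y) =ᵐ[μ] 0 := by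
          rw [← integral_eq_zero_iff_of_nonneg (fun ω => hnonneg 0 ω x y) (intA1 0 x y)]
          exact h1
        have h3 : (fun ω => A 0 ω x y * A 0 ω x' y') =ᵐ[μ] 0 := by
          filter_upwards [h2] with ω hω
          simp only [Pi.zero_apply] at hω ⊢
          rw [hω, zero_mul]
        rw [integral_congr_ae h3]
        simp
      · have h1 : ∫ ω, A 0 ω x' y' ∂μ = 0 := by rw [amean0 x' y', h0]
        have h2 : (fun ω => A 0 ω x' y') =ᵐ[μ] 0 := by
          rw [← integral_eq_zero_iff_of_nonneg (fun ω => hnonneg 0 ω x' y') (intA1 0 x' y')]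
          exact h1
        have h3 : (fun ω => A 0 ω x y * A 0 ω x' y') =ᵐ[μ] 0 := by
          filter_upwards [h2] with ω hω
          simp only [Pi.zero_apply] at hω ⊢
          rw [hω, mul_zero]
        rw [integral_congr_ae h3]
        simp
  -- support sets and finite-sum evolution
  set S0 : Finset (Fin d → ℤ) := hN0fin.toFinset with hS0_def
  set SS : ℕ → Finset (Fin d → ℤ) := FKaux.S S0 B with hSS_def
  set FF : ℕ → Ω → (Fin d → ℤ) → ℝ := fun t ω => FKaux.F N0 SS t (fun s => A s ω) with hFF_def
  have FFmeas : ∀ t u, Measurable (fun ω => FF t ω u) := by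
    intro t u
    exact (FKaux.F_meas N0 SS t u).comp (measurable_pi_lambda _ fun s => hAmeas s)
  have FF0 : ∀ ω, FF 0 ω = N0 := fun ω => rfl
  have FFsucc : ∀ t ω y, FF (t + 1) ω y = ∑ x ∈ SS t, FF t ω x * A t ω x y := fun t ω y => rfl
  -- good events
  have hGood : ∀ t : ℕ, ∀ᵐ ω ∂μ, ∀ x y : Fin d → ℤ, y - x ∉ B → A t ω x y = 0 := by
    intro t
    rw [ae_all_iff]
    intro x
    rw [ae_all_iff]
    intro y
    by_cases h : y - x ∈ B
    · exact Filter.Eventually.of_forall fun ω h' => absurd h h'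
    · have h1 : rA < ∑ i, (x i - y i).natAbs := by
        have h2 := hB _ h
        calc rA < ∑ i, ((y - x) i).natAbs := h2
          _ = ∑ i, (x i - y i).natAbs := by
            apply Finset.sum_congr rfl
            intro i _
            rw [Pi.sub_apply, ← Int.natAbs_neg, neg_sub]
      filter_upwards [hrange t x y h1] with ω h2 _
      exact h2
  -- a.e. identification of evolve with FF, and a.e. support of FF
  have haeF : ∀ t : ℕ, ∀ᵐ ω ∂μ,
      (∀ u, evolve A N0 t ω u = FF t ω u) ∧ (∀ u, u ∉ SS t → FF t ω u = 0) := by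
    intro t
    induction t with
    | zero =>
      apply Filter.Eventually.of_forall
      intro ω
      constructor
      · intro u; rfl
      · intro u hu
        rw [hSS_def] at hu
        have : u ∉ hN0fin.toFinset := hu
        rw [Set.Finite.mem_toFinset, Function.mem_support, not_not] at this
        exact this
    | succ t ih =>
      filter_upwards [ih, hGood t] with ω hω hg
      obtain ⟨h1, h2⟩ := hω
      have hsupp : ∀ u, u ∉ SS (t + 1) → FF (t + 1) ω u = 0 := by
        intro u hu
        rw [FFsucc]
        apply Finset.sum_eq_zero
        intro x hx
        have hxu : u - x ∉ B := by
          intro hmem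
          apply hu
          have : x + (u - x) ∈ SS t + B := Finset.add_mem_add hx hmem
          rwa [add_sub_cancel] at this
        rw [hg x u hxu, mul_zero]
      refine ⟨?_, hsupp⟩
      intro u
      have he : evolve A N0 (t + 1) ω u = ∑' x, evolve A N0 t ω x * A t ω x u := rfl
      rw [he]
      have hc : ∀ x, evolve A N0 t ω x * A t ω x u = FF t ω x * A t ω x u := by
        intro x; rw [h1 x]
      rw [tsum_congr hc, tsum_eq_sum (s := SS t) (fun x hx => by rw [h2 x hx, zero_mul])]
      rfl
  -- independence of FF t from A t
  have indep_step : ∀ (t : ℕ) (u v x y x' y' : Fin d → ℤ),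
      IndepFun (fun ω => FF t ω u * FF t ω v) (fun ω => A t ω x y * A t ω x' y') μ := by
    intro t u v x y x' y'
    have hdisj : Disjoint (Finset.range t) ({t} : Finset ℕ) := by simp
    have base := hindep.indepFun_finset (Finset.range t) {t} hdisj hAmeas
    set extv : ((i : (Finset.range t : Finset ℕ)) → (Fin d → ℤ) → (Fin d → ℤ) → ℝ) →
        ℕ → (Fin d → ℤ) → (Fin d → ℤ) → ℝ :=
      fun g s => if h : s ∈ Finset.range t then g ⟨s, h⟩ else 0 with hextv_def
    have hextmeas : Measurable extv := by
      apply measurable_pi_lambda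
      intro s
      by_cases h : s ∈ Finset.range t
      · simp only [hextv_def, dif_pos h]
        exact measurable_pi_apply _
      · simp only [hextv_def, dif_neg h]
        exact measurable_const
    set φ : ((i : (Finset.range t : Finset ℕ)) → (Fin d → ℤ) → (Fin d → ℤ) → ℝ) → ℝ :=
      fun g => FKaux.F N0 SS t (extv g) u * FKaux.F N0 SS t (extv g) v with hφ_def
    have hφ : Measurable φ :=
      ((FKaux.F_meas N0 SS t u).comp hextmeas).mul ((FKaux.F_meas N0 SS t v).comp hextmeas)
    set ψ : ((i : ({t} : Finset ℕ)) → (Fin d → ℤ) → (Fin d → ℤ) → ℝ) → ℝ :=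
      fun g => g ⟨t, Finset.mem_singleton_self t⟩ x y *
        g ⟨t, Finset.mem_singleton_self t⟩ x' y' with hψ_def
    have hψ : Measurable ψ := by
      have h1 : Measurable (fun g : (i : ({t} : Finset ℕ)) → (Fin d → ℤ) → (Fin d → ℤ) → ℝ =>
          g ⟨t, Finset.mem_singleton_self t⟩) := measurable_pi_apply _
      exact ((h1.eval (a := x)).eval (a := y)).mul ((h1.eval (a := x')).eval (a := y'))
    have comp := base.comp hφ hψ
    have e1 : (φ ∘ fun ω (i : (Finset.range t : Finset ℕ)) => A i ω) =
        fun ω => FF t ω u * FF t ω v := by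
      funext ω
      have hagree : FKaux.F N0 SS t (extv fun i : (Finset.range t : Finset ℕ) => A i ω) =
          FKaux.F N0 SS t (fun s => A s ω) := by
        apply FKaux.F_congr
        intro s hs
        simp only [hextv_def, dif_pos (Finset.mem_range.2 hs)]
      simp only [Function.comp_apply, hφ_def, hagree]
      rfl
    have e2 : (ψ ∘ fun ω (i : ({t} : Finset ℕ)) => A i ω) =
        fun ω => A t ω x y * A t ω x' y' := rfl
    rw [e1, e2] at comp
    exact comp
  -- algebraic expansion of products of sums
  have key : ∀ (t : ℕ) (y y' : Fin d → ℤ), (fun ω => FF (t + 1) ω y * FF (t + 1) ω y') =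
      fun ω => ∑ x ∈ SS t, ∑ x' ∈ SS t,
        (FF t ω x * FF t ω x') * (A t ω x y * A t ω x' y') := by
    intro t y y'
    funext ω
    rw [FFsucc, FFsucc, Finset.sum_mul_sum]
    apply Finset.sum_congr rfl
    intro x _
    apply Finset.sum_congr rfl
    intro x' _
    ring
  -- integrability of pair products
  have intFF : ∀ (t : ℕ) (u v : Fin d → ℤ), Integrable (fun ω => FF t ω u * FF t ω v) μ := by
    intro t
    induction t with
    | zero =>
      intro u v
      have h : (fun ω => FF 0 ω u * FF 0 ω v) = fun _ => N0 u * N0 v := rfl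
      rw [h]
      exact integrable_const _
    | succ t ih =>
      intro u v
      rw [key t u v]
      apply integrable_finset_sum
      intro x _
      apply integrable_finset_sum
      intro x' _
      exact (indep_step t x x' x u x' v).integrable_mul (ih x x') (intAA t x u x' v)
  -- one-step recursion for the two-point function
  have stepE : ∀ (t : ℕ) (y y' : Fin d → ℤ),
      ∫ ω, FF (t + 1) ω y * FF (t + 1) ω y' ∂μ =
        ∑ x ∈ SS t, ∑ x' ∈ SS t, (∫ ω, FF t ω x * FF t ω x' ∂μ) *
          (a (y - x) * a (y' - x') * w x x' y y') := by
    intro t y y'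
    have intterm : ∀ x x' : Fin d → ℤ,
        Integrable (fun ω => (FF t ω x * FF t ω x') * (A t ω x y * A t ω x' y')) μ :=
      fun x x' =>
        (indep_step t x x' x y x' y').integrable_mul (intFF t x x') (intAA t x y x' y')
    rw [key t y y']
    rw [integral_finset_sum _ (fun x _ => integrable_finset_sum _ (fun x' _ => intterm x x'))]
    apply Finset.sum_congr rfl
    intro x _
    rw [integral_finset_sum _ (fun x' _ => intterm x x')]
    apply Finset.sum_congr rfl
    intro x' _
    have h3 : ∫ ω, (FF t ω x * FF t ω x') * (A t ω x y * A t ω x' y') ∂μ =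
        (∫ ω, FF t ω x * FF t ω x' ∂μ) * ∫ ω, A t ω x y * A t ω x' y' ∂μ :=
      (indep_step t x x' x y x' y').integral_fun_mul_eq_mul_integral (intFF t x x').aestronglyMeasurable
        (intAA t x y x' y').aestronglyMeasurable
    rw [h3, mAA t x x' y y']
  -- vanishing of the two-point function off the support sets
  have fzero : ∀ (t : ℕ) (u v : Fin d → ℤ), (u ∉ SS t ∨ v ∉ SS t) →
      ∫ ω, FF t ω u * FF t ω v ∂μ = 0 := by
    intro t u v hor
    have h : (fun ω => FF t ω u * FF t ω v) =ᵐ[μ] fun _ => (0 : ℝ) := by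
      filter_upwards [haeF t] with ω hω
      obtain ⟨_, h2⟩ := hω
      rcases hor with h | h
      · rw [h2 u h, zero_mul]
      · rw [h2 v h, mul_zero]
    rw [integral_congr_ae h]
    simp
  -- reduction of the tsum over starting points to a finite sum
  have tsumN : ∀ (t : ℕ) (p : (Fin d → ℤ) × (Fin d → ℤ)),
      (∑' xx : (Fin d → ℤ) × (Fin d → ℤ), N0 xx.1 * N0 xx.2 * Q t xx p) =
        ∑ xx ∈ S0 ×ˢ S0, N0 xx.1 * N0 xx.2 * Q t xx p := by
    intro t p
    apply tsum_eq_sum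
    intro xx hxx
    rw [Finset.mem_product] at hxx
    push_neg at hxx
    by_cases h1 : xx.1 ∈ S0
    · have h2 := hxx h1
      rw [hS0_def, Set.Finite.mem_toFinset, Function.mem_support, not_not] at h2
      rw [h2, mul_zero, zero_mul]
    · rw [hS0_def, Set.Finite.mem_toFinset, Function.mem_support, not_not] at h1
      rw [h1, zero_mul, zero_mul]
  -- target finsets for the kernel recursion
  set C : (Fin d → ℤ) → Finset (Fin d → ℤ) := fun y => B.image (fun b => y - b) with hC_def
  have hCa : ∀ (y u : Fin d → ℤ), u ∉ C y → a (y - u) = 0 := by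
    intro y u h
    apply afar
    intro hmem
    apply h
    rw [hC_def]
    exact Finset.mem_image.2 ⟨y - u, hmem, sub_sub_cancel y u⟩
  -- finite-sum form of the kernel recursion
  have Qfin : ∀ (t : ℕ) (xx : (Fin d → ℤ) × (Fin d → ℤ)) (y y' : Fin d → ℤ),
      Q (t + 1) xx (y, y') = ∑ p ∈ C y ×ˢ C y', Q t xx p *
        ((a (y - p.1) / na) * (a (y' - p.2) / na) * w p.1 p.2 y y') := by
    intro t xx y y'
    rw [hQstep t xx (y, y')]
    apply tsum_eq_sum
    intro p hp
    rw [Finset.mem_product] at hp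
    push_neg at hp
    by_cases h1 : p.1 ∈ C y
    · have h2 := hp h1
      rw [hCa y' p.2 h2]
      simp
    · rw [hCa y p.1 h1]
      simp
  -- the main induction
  have main : ∀ (t : ℕ) (y y' : Fin d → ℤ), ∫ ω, FF t ω y * FF t ω y' ∂μ =
      na ^ (2 * t) * ∑' xx : (Fin d → ℤ) × (Fin d → ℤ), N0 xx.1 * N0 xx.2 * Q t xx (y, y') := by
    intro t
    induction t with
    | zero =>
      intro y y'
      have h0 : (fun ω => FF 0 ω y * FF 0 ω y') = fun _ => N0 y * N0 y' := rfl
      rw [h0, integral_const]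
      rw [tsum_eq_single ((y, y') : (Fin d → ℤ) × (Fin d → ℤ))]
      · rw [hQ0]
        simp
      · intro b hb
        rw [hQ0, if_neg (fun hh => hb hh.symm), mul_zero]
    | succ t ih =>
      intro y y'
      set f : (Fin d → ℤ) × (Fin d → ℤ) → ℝ := fun p => ∫ ω, FF t ω p.1 * FF t ω p.2 ∂μ
        with hf_def
      set c : (Fin d → ℤ) × (Fin d → ℤ) → ℝ :=
        fun p => a (y - p.1) * a (y' - p.2) * w p.1 p.2 y y' with hc_def
      set D : Finset ((Fin d → ℤ) × (Fin d → ℤ)) := (SS t ∪ C y) ×ˢ (SS t ∪ C y') with hD_def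
      have hLHS : ∫ ω, FF (t + 1) ω y * FF (t + 1) ω y' ∂μ = ∑ p ∈ D, f p * c p := by
        rw [stepE t y y', ← Finset.sum_product (s := SS t) (t := SS t)
          (f := fun p => f p * c p)]
        apply Finset.sum_subset
        · exact Finset.product_subset_product Finset.subset_union_left
            Finset.subset_union_left
        · intro p _ hp
          rw [Finset.mem_product] at hp
          push_neg at hp
          have : p.1 ∉ SS t ∨ p.2 ∉ SS t := by
            by_cases h1 : p.1 ∈ SS t
            · exact Or.inr (hp h1)
            · exact Or.inl h1
          rw [hf_def]
          simp only []
          rw [fzero t p.1 p.2 this, zero_mul]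
      have hRHS : na ^ (2 * (t + 1)) *
          (∑' xx : (Fin d → ℤ) × (Fin d → ℤ), N0 xx.1 * N0 xx.2 * Q (t + 1) xx (y, y')) =
          ∑ p ∈ D, f p * c p := by
        rw [tsumN (t + 1) (y, y'), Finset.mul_sum]
        have hterm : ∀ xx : (Fin d → ℤ) × (Fin d → ℤ),
            na ^ (2 * (t + 1)) * (N0 xx.1 * N0 xx.2 * Q (t + 1) xx (y, y')) =
            ∑ p ∈ C y ×ˢ C y', (na ^ (2 * t) * (N0 xx.1 * N0 xx.2 * Q t xx p)) * c p := by
          intro xx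
          rw [Qfin t xx y y', Finset.mul_sum, Finset.mul_sum]
          apply Finset.sum_congr rfl
          intro p _
          have h2 : na ^ (2 * (t + 1)) = na ^ (2 * t) * na * na := by ring
          rw [h2, hc_def]
          field_simp
        rw [Finset.sum_congr rfl fun xx _ => hterm xx, Finset.sum_comm]
        have hswap : ∀ p : (Fin d → ℤ) × (Fin d → ℤ),
            (∑ xx ∈ S0 ×ˢ S0, (na ^ (2 * t) * (N0 xx.1 * N0 xx.2 * Q t xx p)) * c p) =
            f p * c p := by
          intro p
          rw [← Finset.sum_mul, ← Finset.mul_sum, ← tsumN t p, ← ih p.1 p.2]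
        rw [Finset.sum_congr rfl fun p _ => hswap p]
        apply Finset.sum_subset
        · exact Finset.product_subset_product Finset.subset_union_right
            Finset.subset_union_right
        · intro p _ hp
          rw [Finset.mem_product] at hp
          push_neg at hp
          have hc0 : c p = 0 := by
            by_cases h1 : p.1 ∈ C y
            · rw [hc_def]
              simp only []
              rw [hCa y' p.2 (hp h1), mul_zero, zero_mul]
            · rw [hc_def]
              simp only []
              rw [hCa y p.1 h1, zero_mul, zero_mul]
          rw [hc0, mul_zero]
      rw [hLHS, hRHS]
  -- conclusion
  intro t y y'
  have h1 : ∫ ω, evolve A N0 t ω y * evolve A N0 t ω y' ∂μ =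
      ∫ ω, FF t ω y * FF t ω y' ∂μ := by
    apply integral_congr_ae
    filter_upwards [haeF t] with ω hω
    rw [hω.1 y, hω.1 y']
  rw [h1, main t y y']
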